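/- Let x₁⁰, y₁⁰, x₂⁰ ∈ ℝ with x₂⁰ ≠ 0 and y₁⁰ ≠ 0, and set ω = y₁⁰/x₂⁰. The curve γ : ℝ → ℝ⁵ given by x₁(t) = x₂⁰ sin(ωt) + x₁⁰ cos(ωt), y₁(t) = −ω(x₁⁰ sin(ωt) − x₂⁰ cos(ωt)), x₂(t) = −x₁⁰ sin(ωt) + x₂⁰ cos(ωt), y₂(t) = −ω(x₂⁰ sin(ωt) + x₁⁰ cos(ωt)), z(t) = −ω² is a solution of the 5-component Maxwell–Bloch system defined for all t ∈ ℝ, and it is periodic with period 2π/|ω| = 2π|x₂⁰/y₁⁰|. -/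

import Mathlib

/-- The explicit curve with frequency `ω = y₁⁰/x₂⁰`, constant `z = −ω²` and the trigonometric
components below is a globally defined solution of the 5-component Maxwell–Bloch system, and it
is periodic with period `2π/|ω| = 2π|x₂⁰/y₁⁰|`. -/
theorem maxwell_bloch_periodic_solution (x10 y10 x20 : ℝ)
    (hx20 : x20 ≠ 0) (hy10 : y10 ≠ 0) (ω : ℝ) (hω : ω = y10 / x20)
    (x1 y1 x2 y2 z : ℝ → ℝ)
    (hx1 : ∀ t, x1 t = x20 * Real.sin (ω * t) + x10 * Real.cos (ω * t))
    (hy1 : ∀ t, y1 t = -ω * (x10 * Real.sin (ω * t) - x20 * Real.cos (ω * t)))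
    (hx2 : ∀ t, x2 t = -x10 * Real.sin (ω * t) + x20 * Real.cos (ω * t))
    (hy2 : ∀ t, y2 t = -ω * (x20 * Real.sin (ω * t) + x10 * Real.cos (ω * t)))
    (hz : ∀ t, z t = -ω ^ 2) :
    ((∀ t, HasDerivAt x1 (y1 t) t) ∧
     (∀ t, HasDerivAt y1 (x1 t * z t) t) ∧
     (∀ t, HasDerivAt x2 (y2 t) t) ∧
     (∀ t, HasDerivAt y2 (x2 t * z t) t) ∧
     (∀ t, HasDerivAt z (-(x1 t * y1 t + x2 t * y2 t)) t)) ∧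
    Function.Periodic (fun t => (x1 t, y1 t, x2 t, y2 t, z t)) (2 * Real.pi / |ω|) ∧
    2 * Real.pi / |ω| = 2 * Real.pi * |x20 / y10| := by
  have hωne : ω ≠ 0 := by
    rw [hω]
    exact div_ne_zero hy10 hx20
  have hs : ∀ t, HasDerivAt (fun t => Real.sin (ω * t)) (ω * Real.cos (ω * t)) t := fun t => by
    exact (by simpa [mul_comm] using (Real.hasDerivAt_sin (ω * t)).comp t ((hasDerivAt_id t).const_mul ω) :)
  have hc : ∀ t, HasDerivAt (fun t => Real.cos (ω * t)) (-(ω * Real.sin (ω * t))) t := fun t => by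
    exact (by simpa [mul_comm] using (Real.hasDerivAt_cos (ω * t)).comp t ((hasDerivAt_id t).const_mul ω) :)
  have hx1' : x1 = fun t => x20 * Real.sin (ω * t) + x10 * Real.cos (ω * t) := funext hx1
  have hy1' : y1 = fun t => -ω * (x10 * Real.sin (ω * t) - x20 * Real.cos (ω * t)) := funext hy1
  have hx2' : x2 = fun t => -x10 * Real.sin (ω * t) + x20 * Real.cos (ω * t) := funext hx2
  have hy2' : y2 = fun t => -ω * (x20 * Real.sin (ω * t) + x10 * Real.cos (ω * t)) := funext hy2
  have hz' : z = fun _ => -ω ^ 2 := funext hz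
  refine ⟨⟨?_, ?_, ?_, ?_, ?_⟩, ?_, ?_⟩
  · intro t
    rw [hx1']
    have := ((hs t).const_mul x20).add ((hc t).const_mul x10)
    convert this using 1
    · rfl
    · rfl
    · rfl
    rw [hy1 t]; ring
  · intro t
    rw [hy1']
    have := (((hs t).const_mul x10).sub ((hc t).const_mul x20)).const_mul (-ω)
    convert this using 1
    · rfl
    · rfl
    · rfl
    rw [hx1 t, hz t]; ring
  · intro t
    rw [hx2']
    have := ((hs t).const_mul (-x10)).add ((hc t).const_mul x20)
    convert this using 1
    · rfl
    · rfl
    · rfl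
    rw [hy2 t]; ring
  · intro t
    rw [hy2']
    have := (((hs t).const_mul x20).add ((hc t).const_mul x10)).const_mul (-ω)
    convert this using 1
    · rfl
    · rfl
    · rfl
    rw [hx2 t, hz t]; ring
  · intro t
    rw [hz']
    have : -(x1 t * y1 t + x2 t * y2 t) = 0 := by
      rw [hx1 t, hy1 t, hx2 t, hy2 t]; ring
    rw [this]
    exact hasDerivAt_const t (-ω ^ 2)
  · intro t
    have key : ∀ f : ℝ → ℝ, Function.Periodic f (2 * Real.pi) →
        f (ω * (t + 2 * Real.pi / |ω|)) = f (ω * t) := by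
      intro f hf
      rcases hωne.lt_or_gt with h | h
      · have habs : |ω| = -ω := abs_of_neg h
        have harg : ω * (t + 2 * Real.pi / |ω|) = ω * t - 2 * Real.pi := by
          have h2 : ω * (2 * Real.pi / |ω|) = -(2 * Real.pi) := by
            rw [habs, div_neg, mul_neg, mul_div_cancel₀ _ hωne]
          rw [mul_add, h2]; ring
        rw [harg, hf.sub_eq (ω * t)]
      · have habs : |ω| = ω := abs_of_pos h
        have harg : ω * (t + 2 * Real.pi / |ω|) = ω * t + 2 * Real.pi := by
          have h2 : ω * (2 * Real.pi / |ω|) = 2 * Real.pi := by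
            rw [habs, mul_div_cancel₀ _ hωne]
          rw [mul_add, h2]
        rw [harg, hf (ω * t)]
    have hsin := key Real.sin Real.sin_periodic
    have hcos := key Real.cos Real.cos_periodic
    simp only [hx1, hy1, hx2, hy2, hz, hsin, hcos]
  · rw [hω, abs_div, abs_div]
    rw [div_div_eq_mul_div]
    field_simp
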